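/- Let S be a CA-AG-groupoid (a magma satisfying the left invertive law and cyclic associativity) and let e in S be idempotent (e·e = e). Then e acts as a two-sided identity on the sets eS and Se: for every a in S, e·(e·a) = e·a, (e·a)·e = e·a, e·(a·e) = a·e, and (a·e)·e = a·e. -/
import Mathlib


theorem CA_AG_groupoid_idempotent_identity_on_eS_Se {S : Type*} [Mul S]
    (li : ∀ a b c : S, (a * b) * c = (c * b) * a)
    (ca : ∀ a b c : S, a * (b * c) = c * (a * b))
    (e : S) (he : e * e = e) :
    ∀ a : S, e * (e * a) = e * a ∧ (e * a) * e = e * a ∧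
      e * (a * e) = a * e ∧ (a * e) * e = a * e := by
  intro a
  -- (1) : ∀ x, e * (e * x) = x * e
  have h1 : ∀ x : S, e * (e * x) = x * e := by
    intro x
    calc e * (e * x) = x * (e * e) := ca e e x
    _ = x * e := by rw [he]
  -- (2) : e * a = (a * e) * e
  have h2 : ∀ x : S, e * x = (x * e) * e := by
    intro x
    calc e * x = (e * e) * x := by rw [he]
    _ = (x * e) * e := li e e x
  -- (3) : ∀ x, e * (x * e) = x * e
  have h3 : ∀ x : S, e * (x * e) = x * e := by
    intro x
    calc e * (x * e) = e * (x * (e * e)) := by rw [he]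
    _ = (e * e) * (e * x) := ca e x (e*e)
    _ = e * (e * x) := by rw [he]
    _ = x * e := h1 x
  -- commutativity with e
  have comm : e * a = a * e := by
    have := h1 (a * e)
    rw [h3 a, h3 a] at this
    rw [this, ← h2 a]
  refine ⟨?_, ?_, ?_, ?_⟩
  · rw [h1 a, comm]
  · rw [comm, ← h2 a, comm]
  · exact h3 a
  · rw [← h2 a, comm]
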